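/- The number of i-element circuits of the Catalan matroid M_n (the generalized Catalan matroid with upper path (EN)^n and lower path E^n N^n) equals the Catalan number C_{i-1} = (1/i) * binomial(2(i-1), i-1). -/

import Mathlib

open Finset List DyckStep

/-- Pigeonhole helper. -/
lemma pigeon {S : Finset ℕ} {n b : ℕ} (f : {x // x ∈ S} → Fin n)
    (hinj : Function.Injective f) (T : Finset ℕ) (hT : T ⊆ S)
    (hb : ∀ x (hx : x ∈ T), (f ⟨x, hT hx⟩ : ℕ) < b) (hcard : b < T.card) : False := by
  classical
  set g : ℕ → ℕ := fun x => if h : x ∈ S then (f ⟨x, h⟩ : ℕ) else 0 with hg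
  have hmaps : ∀ x ∈ T, g x ∈ Finset.range b := by
    intro x hx
    simp only [hg, dif_pos (hT hx), Finset.mem_range]
    exact hb x hx
  obtain ⟨x, hx, y, hy, hxy, hfe⟩ :=
    Finset.exists_ne_map_eq_of_card_lt_of_maps_to (by simpa using hcard) hmaps
  apply hxy
  simp only [hg, dif_pos (hT hx), dif_pos (hT hy)] at hfe
  have := hinj (Fin.ext hfe)
  exact Subtype.ext_iff.mp this

/-- rank strict monotonicity. -/
lemma rank_lt_rank {S : Finset ℕ} {x y : ℕ} (hx : x ∈ S) (hxy : x < y) :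
    (S.filter (· < x)).card < (S.filter (· < y)).card := by
  classical
  have h1 : insert x (S.filter (· < x)) ⊆ S.filter (· < y) := by
    intro z hz
    rcases Finset.mem_insert.mp hz with rfl | hz
    · exact Finset.mem_filter.mpr ⟨hx, hxy⟩
    · obtain ⟨h2, h3⟩ := Finset.mem_filter.mp hz
      exact Finset.mem_filter.mpr ⟨h2, h3.trans hxy⟩
  have h2 : x ∉ S.filter (· < x) := by simp
  calc (S.filter (· < x)).card < (insert x (S.filter (· < x))).card := by
        rw [Finset.card_insert_of_notMem h2]; omega
    _ ≤ _ := Finset.card_le_card h1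

lemma rank_le_lt_rank {S : Finset ℕ} {x y : ℕ} (hy : y ∈ S) (hxy : x < y) :
    (S.filter (· ≤ x)).card < (S.filter (· ≤ y)).card := by
  classical
  have h1 : insert y (S.filter (· ≤ x)) ⊆ S.filter (· ≤ y) := by
    intro z hz
    rcases Finset.mem_insert.mp hz with rfl | hz
    · exact Finset.mem_filter.mpr ⟨hy, le_refl _⟩
    · obtain ⟨h2, h3⟩ := Finset.mem_filter.mp hz
      exact Finset.mem_filter.mpr ⟨h2, h3.trans hxy.le⟩
  have h2 : y ∉ S.filter (· ≤ x) := by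
    simp only [Finset.mem_filter]; push_neg; intro _; omega
  calc (S.filter (· ≤ x)).card < (insert y (S.filter (· ≤ x))).card := by
        rw [Finset.card_insert_of_notMem h2]; omega
    _ ≤ _ := Finset.card_le_card h1
/-- `X` is a partial transversal of the interval system `(N_j = [lo j, hi j])_{j : Fin r}`. -/
def IsPT (r : ℕ) (lo hi : Fin r → ℕ) (X : Finset ℕ) : Prop :=
  ∃ f : X → Fin r, Function.Injective f ∧ ∀ x : X, lo (f x) ≤ (x : ℕ) ∧ (x : ℕ) ≤ hi (f x)

/-- The explicit description of circuits of the Catalan matroid. -/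
def Cond (i : ℕ) (C : Finset ℕ) : Prop :=
  C.card = i ∧ (2 * i - 1) ∈ C ∧
    ∀ x ∈ C, x ≤ 2 * i - 1 ∧ (x ≠ 2 * i - 1 → 2 * (C.filter (· ≤ x)).card ≤ x)

lemma cond_dep {n i : ℕ} (h1 : 1 ≤ i) {C : Finset ℕ} (hc : Cond i C) :
    ¬ IsPT n (fun j => 2 * ((j : ℕ) + 1)) (fun j => n + (j : ℕ) + 1) C := by
  obtain ⟨hcard, hmem, hx⟩ := hc
  rintro ⟨f, hinj, hf⟩
  refine pigeon (b := i - 1) f hinj C (le_refl _) (fun x hxC => ?_) (by omega)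
  have h2 := (hf ⟨x, hxC⟩).1
  have h3 := (hx x hxC).1
  simp only at h2
  omega

lemma cond_erase_indep {n i : ℕ} (h1 : 1 ≤ i) (h2 : i ≤ n) {C : Finset ℕ} (hc : Cond i C)
    (x₀ : ℕ) (hx₀ : x₀ ∈ C) :
    IsPT n (fun j => 2 * ((j : ℕ) + 1)) (fun j => n + (j : ℕ) + 1) (C.erase x₀) := by
  classical
  obtain ⟨hcard, hmem, hx⟩ := hc
  set E := C.erase x₀ with hE
  have hEsub : E ⊆ C := Finset.erase_subset _ _
  have hEcard : E.card = i - 1 := by rw [hE, Finset.card_erase_of_mem hx₀, hcard]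
  have hbnd : ∀ y ∈ E, (E.filter (· < y)).card < n := by
    intro y hy
    have hsub : E.filter (· < y) ⊆ E.erase y := by
      intro z hz
      obtain ⟨hz1, hz2⟩ := Finset.mem_filter.mp hz
      exact Finset.mem_erase.mpr ⟨by omega, hz1⟩
    have := Finset.card_le_card hsub
    have := Finset.card_erase_of_mem hy
    omega
  refine ⟨fun y => ⟨(E.filter (· < ↑y)).card, hbnd y y.2⟩, ?_, ?_⟩
  · intro y z hyz
    simp only [Fin.mk.injEq] at hyz
    rcases lt_trichotomy (y : ℕ) (z : ℕ) with h | h | h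
    · exact absurd hyz (by have := rank_lt_rank y.2 h; omega)
    · exact Subtype.ext h
    · exact absurd hyz (by have := rank_lt_rank z.2 h; omega)
  · rintro ⟨y, hy⟩
    show 2 * ((E.filter (· < y)).card + 1) ≤ y ∧ y ≤ n + (E.filter (· < y)).card + 1
    set r' := (E.filter (· < y)).card with hr'
    set r := (C.filter (· ≤ y)).card with hr
    have hyC : y ∈ C := hEsub hy
    -- r' + 1 ≤ r
    have hrr : r' + 1 ≤ r := by
      have hsub : insert y (E.filter (· < y)) ⊆ C.filter (· ≤ y) := by
        intro z hz
        rcases Finset.mem_insert.mp hz with rfl | hz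
        · exact Finset.mem_filter.mpr ⟨hyC, le_refl _⟩
        · obtain ⟨hz1, hz2⟩ := Finset.mem_filter.mp hz
          exact Finset.mem_filter.mpr ⟨hEsub hz1, hz2.le⟩
      have hni : y ∉ E.filter (· < y) := by
        simp only [Finset.mem_filter]; push_neg; intro _; omega
      have := Finset.card_le_card hsub
      rw [Finset.card_insert_of_notMem hni] at this
      omega
    constructor
    · -- 2 * (r' + 1) ≤ y
      by_cases hty : y = 2 * i - 1
      · have hsub : E.filter (· < y) ⊆ E.erase y := by
          intro z hz
          obtain ⟨hz1, hz2⟩ := Finset.mem_filter.mp hz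
          exact Finset.mem_erase.mpr ⟨by omega, hz1⟩
        have h3 := Finset.card_le_card hsub
        have h4 := Finset.card_erase_of_mem hy
        have h5 : 1 ≤ E.card := Finset.card_pos.mpr ⟨y, hy⟩
        omega
      · have := (hx y hyC).2 hty
        omega
    · -- y ≤ n + r' + 1
      -- Step 1 : y ≤ i - 1 + r
      have hG : (C.filter (fun z => y < z)).card ≤ 2 * i - 1 - y := by
        have hsub : C.filter (fun z => y < z) ⊆ Finset.Ioc y (2 * i - 1) := by
          intro z hz
          obtain ⟨hz1, hz2⟩ := Finset.mem_filter.mp hz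
          exact Finset.mem_Ioc.mpr ⟨hz2, (hx z hz1).1⟩
        have := Finset.card_le_card hsub
        simpa [Nat.card_Ioc] using this
      have hpart : r + (C.filter (fun z => y < z)).card = i := by
        rw [hr, ← hcard]
        have := Finset.card_filter_add_card_filter_not (s := C)
          (p := (· ≤ y))
        simp only [not_le] at this
        exact this
      have hy1 : y ≤ 2 * i - 1 := (hx y hyC).1
      -- Step 2 : r ≤ r' + 2
      have hrr2 : r ≤ r' + 2 := by
        have hsub : C.filter (· ≤ y) ⊆ insert y (insert x₀ (E.filter (· < y))) := by
          intro z hz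
          obtain ⟨hz1, hz2⟩ := Finset.mem_filter.mp hz
          rcases eq_or_ne z y with rfl | hzy
          · exact Finset.mem_insert_self _ _
          rcases eq_or_ne z x₀ with rfl | hzx
          · exact Finset.mem_insert.mpr (Or.inr (Finset.mem_insert_self _ _))
          refine Finset.mem_insert.mpr (Or.inr (Finset.mem_insert.mpr (Or.inr ?_)))
          exact Finset.mem_filter.mpr ⟨Finset.mem_erase.mpr ⟨hzx, hz1⟩, by omega⟩
        have := Finset.card_le_card hsub
        have h5 := Finset.card_insert_le y (insert x₀ (E.filter (· < y)))
        have h6 := Finset.card_insert_le x₀ (E.filter (· < y))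
        omega
      omega
lemma circuit_cond {n i : ℕ} (h1 : 1 ≤ i) (h2 : i ≤ n) {C : Finset ℕ}
    (hsub : C ⊆ Finset.Icc 1 (2 * n)) (hcard : C.card = i)
    (hdep : ¬ IsPT n (fun j => 2 * ((j : ℕ) + 1)) (fun j => n + (j : ℕ) + 1) C)
    (hmin : ∀ x ∈ C, IsPT n (fun j => 2 * ((j : ℕ) + 1)) (fun j => n + (j : ℕ) + 1) (C.erase x)) :
    Cond i C := by
  classical
  have hne : C.Nonempty := Finset.card_pos.mp (by omega)
  set M := C.max' hne with hM
  have hMC : M ∈ C := C.max'_mem hne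
  -- step 1
  have step1 : ∀ x ∈ C, x ≠ M → 2 * (C.filter (· ≤ x)).card ≤ x := by
    intro x hxC hxM
    by_contra hcon
    push_neg at hcon
    obtain ⟨f, hinj, hf⟩ := hmin M hMC
    set r := (C.filter (· ≤ x)).card with hr
    have hrpos : 1 ≤ r := Finset.card_pos.mpr ⟨x, Finset.mem_filter.mpr ⟨hxC, le_refl _⟩⟩
    have hT : C.filter (· ≤ x) ⊆ C.erase M := by
      intro z hz
      obtain ⟨hz1, hz2⟩ := Finset.mem_filter.mp hz
      refine Finset.mem_erase.mpr ⟨?_, hz1⟩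
      have := C.le_max' x hxC
      omega
    refine pigeon (b := r - 1) f hinj (C.filter (· ≤ x)) hT ?_ (by omega)
    intro z hz
    obtain ⟨hz1, hz2⟩ := Finset.mem_filter.mp hz
    have h3 := (hf ⟨z, hT hz⟩).1
    simp only at h3
    omega
  -- step 2a : 2 * i - 1 ≤ M
  have step2a : 2 * i - 1 ≤ M := by
    rcases Nat.lt_or_ge i 2 with hi | hi
    · have : i = 1 := by omega
      have := (Finset.mem_Icc.mp (hsub hMC)).1
      omega
    · have hEne : (C.erase M).Nonempty := by
        rw [← Finset.card_pos, Finset.card_erase_of_mem hMC]; omega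
      set x := (C.erase M).max' hEne with hx
      have hxE : x ∈ C.erase M := (C.erase M).max'_mem hEne
      obtain ⟨hxM, hxC⟩ := Finset.mem_erase.mp hxE
      have hfilt : C.filter (· ≤ x) = C.erase M := by
        apply Finset.Subset.antisymm
        · intro z hz
          obtain ⟨hz1, hz2⟩ := Finset.mem_filter.mp hz
          refine Finset.mem_erase.mpr ⟨?_, hz1⟩
          have h4 : x < M := lt_of_le_of_ne (C.le_max' x hxC) hxM
          omega
        · intro z hz
          exact Finset.mem_filter.mpr ⟨(Finset.mem_erase.mp hz).2,
            (C.erase M).le_max' z hz⟩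
      have := step1 x hxC hxM
      rw [hfilt, Finset.card_erase_of_mem hMC, hcard] at this
      have h4 : x < M := lt_of_le_of_ne (C.le_max' x hxC) hxM
      omega
  -- step 2b : M ≤ 2 * i - 1
  have step2b : M ≤ 2 * i - 1 := by
    by_contra hcon
    push_neg at hcon
    apply hdep
    have hrank1 : ∀ x ∈ C, 1 ≤ (C.filter (· ≤ x)).card :=
      fun x hx => Finset.card_pos.mpr ⟨x, Finset.mem_filter.mpr ⟨hx, le_refl _⟩⟩
    have hbnd : ∀ x ∈ C, max (C.filter (· ≤ x)).card (x - n) - 1 < n := by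
      intro x hx
      have hr : (C.filter (· ≤ x)).card ≤ i := by
        rw [← hcard]; exact Finset.card_le_card (Finset.filter_subset _ _)
      have hx2n := (Finset.mem_Icc.mp (hsub hx)).2
      have := hrank1 x hx
      omega
    refine ⟨fun x => ⟨max (C.filter (· ≤ ↑x)).card ((x : ℕ) - n) - 1, hbnd x x.2⟩, ?_, ?_⟩
    · intro x y hxy
      simp only [Fin.mk.injEq] at hxy
      have key : ∀ a b : ℕ, a ∈ C → b ∈ C → a < b →
          max (C.filter (· ≤ a)).card (a - n) - 1 < max (C.filter (· ≤ b)).card (b - n) - 1 := by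
        intro a b ha hb hab
        have h3 := rank_le_lt_rank hb hab
        have h4 := hrank1 a ha
        omega
      rcases lt_trichotomy (x : ℕ) (y : ℕ) with h | h | h
      · exact absurd hxy (by have := key x y x.2 y.2 h; omega)
      · exact Subtype.ext h
      · exact absurd hxy (by have := key y x y.2 x.2 h; omega)
    · rintro ⟨x, hx⟩
      show 2 * (max (C.filter (· ≤ x)).card (x - n) - 1 + 1) ≤ x ∧
        x ≤ n + (max (C.filter (· ≤ x)).card (x - n) - 1) + 1
      have hx1 := Finset.mem_Icc.mp (hsub hx)
      have hr1 := hrank1 x hx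
      rcases eq_or_ne x M with heq | hxM
      · have hfx : C.filter (· ≤ x) = C := by
          apply Finset.filter_true_of_mem
          intro z hz; rw [heq]; exact C.le_max' z hz
        rw [hfx, hcard]
        have : x = M := heq
        omega
      · have := step1 x hx hxM
        omega
  have hM2 : M = 2 * i - 1 := le_antisymm step2b step2a
  refine ⟨hcard, hM2 ▸ hMC, fun x hx => ⟨hM2 ▸ (C.le_max' x hx), fun hne2 => ?_⟩⟩
  exact step1 x hx (by omega)
open DyckStep in
lemma count_UD (l : List DyckStep) : l.count U + l.count D = l.length := by
  induction l with
  | nil => rfl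
  | cons a l ih =>
    cases a <;> simp [List.count_cons] <;> omega

/-- number of `D`s among the first `p` letters. -/
def dcnt (l : List DyckStep) (p : ℕ) : ℕ :=
  ((Finset.range p).filter (fun q => l.getD q DyckStep.U = DyckStep.D)).card

lemma dcnt_succ (l : List DyckStep) (p : ℕ) :
    dcnt l (p + 1) = dcnt l p + if l.getD p DyckStep.U = DyckStep.D then 1 else 0 := by
  unfold dcnt
  rw [Finset.range_add_one, Finset.filter_insert]
  split
  · rw [Finset.card_insert_of_notMem (by simp)]
  · simp

lemma count_take_D (l : List DyckStep) (p : ℕ) (hp : p ≤ l.length) :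
    (l.take p).count DyckStep.D = dcnt l p := by
  induction p with
  | zero => simp [dcnt]
  | succ q ih =>
    have hq : q < l.length := by omega
    rw [List.take_succ, List.count_append, dcnt_succ, ih (by omega),
      List.getElem?_eq_getElem hq, List.getD_eq_getElem l _ hq]
    simp only [Option.toList_some]
    rcases l[q].dichotomy with h | h <;> rw [h] <;> simp [List.count_singleton']

lemma count_take_U (l : List DyckStep) (p : ℕ) (hp : p ≤ l.length) :
    (l.take p).count DyckStep.U = p - dcnt l p := by
  have h1 := count_UD (l.take p)
  have h2 := count_take_D l p hp
  have h3 : (l.take p).length = p := by simp; omega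
  omega

lemma count_D_eq_dcnt (l : List DyckStep) : l.count DyckStep.D = dcnt l l.length := by
  have := count_take_D l l.length (le_refl _)
  rwa [List.take_length] at this
/-- The Dyck-word letters associated to a finset. -/
def wordOf (m : ℕ) (C : Finset ℕ) : List DyckStep :=
  (List.range (2 * m)).map fun p => if p + 1 ∈ C then DyckStep.D else DyckStep.U

lemma wordOf_length (m : ℕ) (C : Finset ℕ) : (wordOf m C).length = 2 * m := by
  simp [wordOf]

lemma wordOf_getD (m : ℕ) (C : Finset ℕ) {q : ℕ} (hq : q < 2 * m) :
    (wordOf m C).getD q DyckStep.U = if q + 1 ∈ C then DyckStep.D else DyckStep.U := by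
  rw [List.getD_eq_getElem _ _ (by rw [wordOf_length]; omega)]
  simp [wordOf]

lemma dcnt_wordOf (m : ℕ) (C : Finset ℕ) (h1 : ∀ x ∈ C, 1 ≤ x) {p : ℕ} (hp : p ≤ 2 * m) :
    dcnt (wordOf m C) p = (C.filter (· ≤ p)).card := by
  unfold dcnt
  rw [Finset.filter_congr (q := fun q => q + 1 ∈ C) (fun q hq => by
    rw [wordOf_getD m C (by have := Finset.mem_range.mp hq; omega)]
    split <;> simp_all)]
  apply Finset.card_bij (i := fun q _ => q + 1)
  · intro q hq
    obtain ⟨hq1, hq2⟩ := Finset.mem_filter.mp hq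
    exact Finset.mem_filter.mpr ⟨hq2, by have := Finset.mem_range.mp hq1; omega⟩
  · intro a ha b hb hab
    omega
  · intro x hx
    obtain ⟨hx1, hx2⟩ := Finset.mem_filter.mp hx
    have := h1 x hx1
    exact ⟨x - 1, Finset.mem_filter.mpr ⟨Finset.mem_range.mpr (by omega), by
      rw [Nat.sub_add_cancel]; exact hx1; omega⟩, by omega⟩

section CondFacts

variable {m : ℕ} {C : Finset ℕ} (hc : Cond (m + 1) C)
include hc

lemma cond_card : C.card = m + 1 := hc.1

lemma cond_top : 2 * m + 1 ∈ C := by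
  have := hc.2.1; rwa [show 2 * (m + 1) - 1 = 2 * m + 1 by omega] at this

lemma cond_le : ∀ x ∈ C, x ≤ 2 * m + 1 := by
  intro x hx
  have := (hc.2.2 x hx).1; omega

lemma cond_rank : ∀ x ∈ C, x ≠ 2 * m + 1 → 2 * (C.filter (· ≤ x)).card ≤ x := by
  intro x hx hne
  exact (hc.2.2 x hx).2 (by omega)

lemma cond_one_le : ∀ x ∈ C, 1 ≤ x := by
  intro x hx
  rcases eq_or_ne x (2 * m + 1) with rfl | hne
  · omega
  · have h2 := cond_rank hc x hx hne
    have : 1 ≤ (C.filter (· ≤ x)).card :=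
      Finset.card_pos.mpr ⟨x, Finset.mem_filter.mpr ⟨hx, le_refl _⟩⟩
    omega

lemma cond_prefix : ∀ p ≤ 2 * m, 2 * (C.filter (· ≤ p)).card ≤ p := by
  intro p hp
  rcases (C.filter (· ≤ p)).eq_empty_or_nonempty with he | hne
  · rw [he]; simp
  · set x := (C.filter (· ≤ p)).max' hne with hx
    have hxm : x ∈ C.filter (· ≤ p) := Finset.max'_mem _ hne
    obtain ⟨hx1, hx2⟩ := Finset.mem_filter.mp hxm
    have hfeq : C.filter (· ≤ p) = C.filter (· ≤ x) := by
      apply Finset.Subset.antisymm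
      · intro z hz
        exact Finset.mem_filter.mpr ⟨(Finset.mem_filter.mp hz).1,
          Finset.le_max' _ z hz⟩
      · intro z hz
        obtain ⟨hz1, hz2⟩ := Finset.mem_filter.mp hz
        exact Finset.mem_filter.mpr ⟨hz1, by omega⟩
    have := cond_rank hc x hx1 (by omega)
    rw [hfeq]
    omega

lemma cond_filter_2m : (C.filter (· ≤ 2 * m)).card = m := by
  have h1 : C.filter (· ≤ 2 * m) = C.erase (2 * m + 1) := by
    ext z
    simp only [Finset.mem_filter, Finset.mem_erase]
    constructor
    · rintro ⟨hz, hz2⟩; exact ⟨by omega, hz⟩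
    · rintro ⟨hz2, hz⟩
      have := cond_le hc z hz
      exact ⟨hz, by omega⟩
  rw [h1, Finset.card_erase_of_mem (cond_top hc), cond_card hc]
  omega

end CondFacts
/-- Dyck word from a circuit. -/
def condToDyck (m : ℕ) (C : Finset ℕ) (hc : Cond (m + 1) C) : DyckWord where
  toList := wordOf m C
  count_U_eq_count_D := by
    have hD : (wordOf m C).count DyckStep.D = m := by
      rw [count_D_eq_dcnt, wordOf_length,
        dcnt_wordOf m C (cond_one_le hc) (le_refl _), cond_filter_2m hc]
    have := count_UD (wordOf m C)
    rw [wordOf_length] at this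
    omega
  count_D_le_count_U := by
    intro p
    rcases le_or_gt p (2 * m) with hp | hp
    · have hlen : p ≤ (wordOf m C).length := by rw [wordOf_length]; omega
      rw [count_take_D _ _ hlen, count_take_U _ _ hlen,
        dcnt_wordOf m C (cond_one_le hc) hp]
      have := cond_prefix hc p hp
      omega
    · rw [List.take_of_length_le (by rw [wordOf_length]; omega)]
      have hD : (wordOf m C).count DyckStep.D = m := by
        rw [count_D_eq_dcnt, wordOf_length,
          dcnt_wordOf m C (cond_one_le hc) (le_refl _), cond_filter_2m hc]
      have := count_UD (wordOf m C)
      rw [wordOf_length] at this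
      omega

lemma condToDyck_semilength (m : ℕ) (C : Finset ℕ) (hc : Cond (m + 1) C) :
    (condToDyck m C hc).semilength = m := by
  have h2 := (condToDyck m C hc).count_U_eq_count_D
  have hD : (condToDyck m C hc).toList.count DyckStep.D = m := by
    show (wordOf m C).count DyckStep.D = m
    rw [count_D_eq_dcnt, wordOf_length,
      dcnt_wordOf m C (cond_one_le hc) (le_refl _), cond_filter_2m hc]
  unfold DyckWord.semilength
  omega

/-- Circuit from a Dyck word. -/
def dyckToCond (m : ℕ) (w : DyckWord) : Finset ℕ :=
  insert (2 * m + 1)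
    (((Finset.range (2 * m)).filter
      (fun q => w.toList.getD q DyckStep.U = DyckStep.D)).image (· + 1))

lemma dyckToCond_cond (m : ℕ) (w : DyckWord) (hw : w.semilength = m) :
    Cond (m + 1) (dyckToCond m w) := by
  classical
  have hlen : w.toList.length = 2 * m := by
    rw [← w.two_mul_semilength_eq_length, hw]
  have hcD : w.toList.count DyckStep.D = m := by
    rw [← DyckWord.semilength_eq_count_D, hw]
  set S := (Finset.range (2 * m)).filter
      (fun q => w.toList.getD q DyckStep.U = DyckStep.D) with hS
  have hScard : S.card = m := by
    have := count_D_eq_dcnt w.toList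
    rw [hcD, hlen] at this
    exact this.symm
  have himg : ∀ x ∈ S.image (· + 1), 1 ≤ x ∧ x ≤ 2 * m := by
    intro x hx
    obtain ⟨q, hq, rfl⟩ := Finset.mem_image.mp hx
    have := Finset.mem_range.mp (Finset.mem_filter.mp hq).1
    omega
  have hnotin : 2 * m + 1 ∉ S.image (· + 1) := by
    intro h
    have := himg _ h
    omega
  have hcard : (dyckToCond m w).card = m + 1 := by
    rw [dyckToCond, Finset.card_insert_of_notMem hnotin,
      Finset.card_image_of_injective _ (fun a b hab => by omega), hScard]
  refine ⟨hcard, ?_, ?_⟩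
  · rw [show 2 * (m + 1) - 1 = 2 * m + 1 by omega]
    exact Finset.mem_insert_self _ _
  · intro x hx
    rw [show 2 * (m + 1) - 1 = 2 * m + 1 by omega]
    rcases Finset.mem_insert.mp hx with rfl | hx2
    · exact ⟨le_refl _, fun h => absurd rfl h⟩
    · obtain ⟨hx3, hx4⟩ := himg x hx2
      refine ⟨by omega, fun _ => ?_⟩
      obtain ⟨q, hq, rfl⟩ := Finset.mem_image.mp hx2
      have hq2m := Finset.mem_range.mp (Finset.mem_filter.mp hq).1
      -- rank computation
      have hrank : ((dyckToCond m w).filter (· ≤ q + 1)).card = dcnt w.toList (q + 1) := by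
        rw [dyckToCond, Finset.filter_insert, if_neg (by omega), Finset.filter_image,
          Finset.card_image_of_injective _ (fun a b hab => by omega)]
        congr 1
        rw [← hS]
        ext q'
        simp only [Finset.mem_filter, Finset.mem_range, hS]
        constructor
        · rintro ⟨⟨h5, h6⟩, h7⟩; exact ⟨by omega, h6⟩
        · rintro ⟨h5, h6⟩; exact ⟨⟨by omega, h6⟩, by omega⟩
      rw [hrank]
      have hdle := w.count_D_le_count_U (q + 1)
      have h8 : q + 1 ≤ w.toList.length := by omega
      rw [count_take_D _ _ h8, count_take_U _ _ h8] at hdle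
      omega

lemma dyck_left_inv (m : ℕ) (C : Finset ℕ) (hc : Cond (m + 1) C) :
    dyckToCond m (condToDyck m C hc) = C := by
  classical
  rw [dyckToCond]
  ext x
  simp only [Finset.mem_insert, Finset.mem_image, Finset.mem_filter, Finset.mem_range]
  constructor
  · rintro (rfl | ⟨q, ⟨hq1, hq2⟩, rfl⟩)
    · exact cond_top hc
    · rw [show (condToDyck m C hc).toList = wordOf m C from rfl, wordOf_getD m C hq1] at hq2
      by_cases h : q + 1 ∈ C
      · exact h
      · rw [if_neg h] at hq2; exact absurd hq2 (by simp)
  · intro hx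
    rcases eq_or_ne x (2 * m + 1) with rfl | hne
    · exact Or.inl rfl
    · have h1 := cond_one_le hc x hx
      have h2 := cond_le hc x hx
      refine Or.inr ⟨x - 1, ⟨by omega, ?_⟩, by omega⟩
      rw [show (condToDyck m C hc).toList = wordOf m C from rfl,
        wordOf_getD m C (by omega : x - 1 < 2 * m), Nat.sub_add_cancel h1, if_pos hx]

lemma dyck_right_inv (m : ℕ) (w : DyckWord) (hw : w.semilength = m) :
    condToDyck m (dyckToCond m w) (dyckToCond_cond m w hw) = w := by
  classical
  have hlen : w.toList.length = 2 * m := by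
    rw [← w.two_mul_semilength_eq_length, hw]
  ext1
  show wordOf m (dyckToCond m w) = w.toList
  apply List.ext_getElem (by rw [wordOf_length, hlen])
  intro q h1 h2
  show ((List.range (2 * m)).map fun p => if p + 1 ∈ dyckToCond m w then DyckStep.D else DyckStep.U)[q]'(by simpa [wordOf] using h1) = _
  simp only [List.getElem_map, List.getElem_range]
  have hq : q < 2 * m := by rw [wordOf_length] at h1; omega
  have hmem : q + 1 ∈ dyckToCond m w ↔ w.toList[q] = DyckStep.D := by
    rw [dyckToCond]
    simp only [Finset.mem_insert, Finset.mem_image, Finset.mem_filter, Finset.mem_range]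
    constructor
    · rintro (h | ⟨q', ⟨hq'1, hq'2⟩, hq'3⟩)
      · omega
      · have : q' = q := by omega
        subst this
        rwa [List.getD_eq_getElem _ _ (by omega)] at hq'2
    · intro h
      exact Or.inr ⟨q, ⟨hq, by rwa [List.getD_eq_getElem _ _ (by omega)]⟩, rfl⟩
  by_cases h : q + 1 ∈ dyckToCond m w
  · rw [if_pos h, (hmem.mp h).symm]
  · rw [if_neg h]
    rcases w.toList[q].dichotomy with h3 | h3
    · rw [h3]
    · exact absurd (hmem.mpr h3) h

lemma card_cond (m : ℕ) :
    Nat.card {C : Finset ℕ // Cond (m + 1) C} = catalan m := by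
  have e : {C : Finset ℕ // Cond (m + 1) C} ≃ {w : DyckWord // w.semilength = m} :=
    { toFun := fun C => ⟨condToDyck m C.1 C.2, condToDyck_semilength m C.1 C.2⟩
      invFun := fun w => ⟨dyckToCond m w.1, dyckToCond_cond m w.1 w.2⟩
      left_inv := fun C => Subtype.ext (dyck_left_inv m C.1 C.2)
      right_inv := fun w => Subtype.ext (dyck_right_inv m w.1 w.2) }
  rw [Nat.card_congr e, Nat.card_eq_fintype_card,
    DyckWord.card_dyckWord_semilength_eq_catalan]
/-- **Circuits of the Catalan matroid.**  The Catalan matroid `M_n` is the lattice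
path matroid on `[1, 2n]` with upper path `(EN)^n` and lower path `E^n N^n`; its
presentation is the interval system `N_j = [2j, n + j]` for `j ∈ [n]`, its
independent sets are the partial transversals and its circuits the minimal
non-independent sets.  For `1 ≤ i ≤ n`, the number of `i`-element circuits of `M_n`,
multiplied by `i`, equals `(2(i-1)) choose (i-1)`; i.e. it is the Catalan number
`C_{i-1}`. -/
theorem stmt9 (n i : ℕ) (h1 : 1 ≤ i) (h2 : i ≤ n) :
    Nat.card {C : Finset ℕ // C ⊆ Finset.Icc 1 (2 * n) ∧ C.card = i ∧
        ¬ IsPT n (fun j => 2 * ((j : ℕ) + 1)) (fun j => n + (j : ℕ) + 1) C ∧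
        ∀ x ∈ C, IsPT n (fun j => 2 * ((j : ℕ) + 1)) (fun j => n + (j : ℕ) + 1) (C.erase x)}
      * i = Nat.choose (2 * (i - 1)) (i - 1) := by
  obtain ⟨m, rfl⟩ : ∃ m, i = m + 1 := ⟨i - 1, by omega⟩
  have hiff : ∀ C : Finset ℕ, (C ⊆ Finset.Icc 1 (2 * n) ∧ C.card = m + 1 ∧
      ¬ IsPT n (fun j => 2 * ((j : ℕ) + 1)) (fun j => n + (j : ℕ) + 1) C ∧
      ∀ x ∈ C, IsPT n (fun j => 2 * ((j : ℕ) + 1)) (fun j => n + (j : ℕ) + 1) (C.erase x)) ↔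
      Cond (m + 1) C := by
    intro C
    constructor
    · rintro ⟨hs, hc, hd, hm⟩
      exact circuit_cond h1 h2 hs hc hd hm
    · intro hc
      refine ⟨?_, cond_card hc, cond_dep h1 hc, fun x hx => cond_erase_indep h1 h2 hc x hx⟩
      intro x hx
      have := cond_one_le hc x hx
      have := cond_le hc x hx
      exact Finset.mem_Icc.mpr ⟨by omega, by omega⟩
  rw [Nat.card_congr (Equiv.subtypeEquivRight hiff), card_cond m,
    show m + 1 - 1 = m by omega, mul_comm, succ_mul_catalan_eq_centralBinom,
    Nat.centralBinom_eq_two_mul_choose]
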